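/- Let A and B be Archimedean semiprime f-algebras with point separating order duals and with weak order units e_A and e_B respectively, and let T : A → B be a weak Markov operator that is a lattice homomorphism. Then for every weak Markov operator S : A → B and every real α > 0 with αT − S ≥ 0 (i.e. αT − S is a positive operator), one has S = T. -/

import Mathlib

section RieszAux

variable {β : Type*} [AddCommGroup β] [Lattice β] [CovariantClass β β (· + ·) (· ≤ ·)]

private lemma inf_add_le_aux {a b c : β} (ha : 0 ≤ a) (hb : 0 ≤ b) (hc : 0 ≤ c) :
    (a + b) ⊓ c ≤ a ⊓ c + b ⊓ c := by
  have h : a ⊓ c + b ⊓ c = ((a + b) ⊓ (c + b)) ⊓ ((a + c) ⊓ (c + c)) := by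
    rw [add_inf b c (a ⊓ c), inf_add a c b, inf_add a c c]
  rw [h]
  refine le_inf (le_inf inf_le_left ?_) (le_inf ?_ ?_)
  · exact inf_le_right.trans (le_add_of_nonneg_right hb)
  · exact inf_le_right.trans (le_add_of_nonneg_left ha)
  · exact inf_le_right.trans (le_add_of_nonneg_left hc)

private lemma nsmul_inf_eq_zero {x y : β} (h : x ⊓ y = 0) (n : ℕ) : (n • x) ⊓ y = 0 := by
  have hx : 0 ≤ x := by rw [← h]; exact inf_le_left
  have hy : 0 ≤ y := by rw [← h]; exact inf_le_right
  induction n with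
  | zero => rw [zero_smul]; exact inf_eq_left.mpr hy
  | succ n ih =>
    refine le_antisymm ?_ (le_inf (nsmul_nonneg hx _) hy)
    calc ((n + 1) • x) ⊓ y = (n • x + x) ⊓ y := by rw [succ_nsmul]
      _ ≤ (n • x) ⊓ y + x ⊓ y := inf_add_le_aux (nsmul_nonneg hx n) hx hy
      _ = 0 := by rw [ih, h, add_zero]

private lemma disj_of_le {x y z : β} (h : x ⊓ y = 0) (hz0 : 0 ≤ z) (hz : z ≤ x) :
    z ⊓ y = 0 := by
  have hy : 0 ≤ y := by rw [← h]; exact inf_le_right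
  exact le_antisymm (le_trans (inf_le_inf_right y hz) h.le) (le_inf hz0 hy)

private lemma disj_add {x y z : β} (h1 : z ⊓ x = 0) (h2 : z ⊓ y = 0) :
    z ⊓ (x + y) = 0 := by
  have hz : 0 ≤ z := by rw [← h1]; exact inf_le_left
  have hx : 0 ≤ x := by rw [← h1]; exact inf_le_right
  have hy : 0 ≤ y := by rw [← h2]; exact inf_le_right
  refine le_antisymm ?_ (le_inf hz (add_nonneg hx hy))
  calc z ⊓ (x + y) = (x + y) ⊓ z := inf_comm ..
    _ ≤ x ⊓ z + y ⊓ z := inf_add_le_aux hx hy hz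
    _ = 0 := by rw [inf_comm x z, inf_comm y z, h1, h2, add_zero]

variable [Module ℝ β]

private lemma disj_of_le_smul {x y z : β} (h : x ⊓ y = 0) (hz0 : 0 ≤ z) {α : ℝ}
    (hsmul : ∀ (r : ℝ) (x : β), 0 ≤ r → 0 ≤ x → 0 ≤ r • x)
    (hα : 0 ≤ α) (hz : z ≤ α • x) : z ⊓ y = 0 := by
  have hx : 0 ≤ x := by rw [← h]; exact inf_le_left
  have hN : α • x ≤ ⌈α⌉₊ • x := by
    have h1 : 0 ≤ ((⌈α⌉₊ : ℝ) - α) • x := hsmul _ _ (by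
      have := Nat.le_ceil α; linarith) hx
    rw [sub_smul, Nat.cast_smul_eq_nsmul] at h1
    exact sub_nonneg.mp h1
  exact disj_of_le (nsmul_inf_eq_zero h ⌈α⌉₊) hz0 (hz.trans hN)

/-- The key Riesz-space lemma. -/
private lemma key_lemma
    (hsmul : ∀ (r : ℝ) (x : β), 0 ≤ r → 0 ≤ x → 0 ≤ r • x)
    (harch : ∀ x y : β, (∀ n : ℕ, n • x ≤ y) → x ≤ 0)
    (e u v : β) (he : 0 ≤ e) (hv : 0 ≤ v)
    (hD : ∀ t : ℝ, 0 < t → (u - t • e)⁺ ⊓ (t • e - v)⁺ = 0) :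
    (u - v)⁺ ⊓ e = 0 := by
  have smul_mono : ∀ (r : ℝ) (x y : β), 0 ≤ r → x ≤ y → r • x ≤ r • y := by
    intro r x y hr hxy
    have h := hsmul r (y - x) hr (sub_nonneg.mpr hxy)
    rw [smul_sub] at h
    exact sub_nonneg.mp h
  -- Step 1: for every positive `n`, `(u - v - n⁻¹ • e)⁺ ⊓ e = 0`.
  have step1 : ∀ n : ℕ, 0 < n → (u - v - ((n : ℝ))⁻¹ • e)⁺ ⊓ e = 0 := by
    intro n hn
    set ε : ℝ := ((n : ℝ))⁻¹ with hε
    have hεpos : 0 < ε := by positivity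
    set w : β := (u - v - ε • e)⁺ ⊓ e with hw
    have hw0 : 0 ≤ w := le_inf (posPart_nonneg _) he
    have hwe : w ≤ e := inf_le_right
    have hC : ∀ k : ℕ, w ⊓ (((k : ℝ) * ε) • e - v)⁺ = 0 := by
      intro k
      induction k with
      | zero =>
        have h0 : (((0 : ℕ) : ℝ) * ε) • e - v = -v := by
          push_cast
          rw [zero_mul, zero_smul, zero_sub]
        rw [h0, posPart_eq_zero.mpr (neg_nonpos.mpr hv)]
        exact inf_eq_right.mpr hw0
      | succ k ih =>
        set t : ℝ := ((k + 1 : ℕ) : ℝ) * ε with ht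
        have htpos : 0 < t := by positivity
        set m : β := w ⊓ (t • e - v)⁺ with hm
        have hm0 : 0 ≤ m := le_inf hw0 (posPart_nonneg _)
        have hd1 : m ⊓ (u - t • e)⁺ = 0 := by
          have hD' := hD t htpos
          rw [inf_comm] at hD'
          exact disj_of_le hD' hm0 inf_le_right
        have hd2 : m ⊓ (((k : ℝ) * ε) • e - v)⁺ = 0 := disj_of_le ih hm0 inf_le_left
        have hsum : m ⊓ ((u - t • e)⁺ + (((k : ℝ) * ε) • e - v)⁺) = 0 := disj_add hd1 hd2
        have hts : t • e = ((k : ℝ) * ε) • e + ε • e := by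
          rw [← add_smul]
          congr 1
          push_cast [ht]
          ring
        have hble : u - v - ε • e ≤ (u - t • e)⁺ + (((k : ℝ) * ε) • e - v)⁺ := by
          calc u - v - ε • e = (u - t • e) + (((k : ℝ) * ε) • e - v) := by rw [hts]; abel
            _ ≤ _ := add_le_add (le_posPart _) (le_posPart _)
        have hple : (u - v - ε • e)⁺ ≤ (u - t • e)⁺ + (((k : ℝ) * ε) • e - v)⁺ := by
          rw [posPart_def]
          exact sup_le hble (add_nonneg (posPart_nonneg _) (posPart_nonneg _))
        have hmle : m ≤ (u - t • e)⁺ + (((k : ℝ) * ε) • e - v)⁺ :=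
          le_trans (le_trans inf_le_left inf_le_left) hple
        calc m = m ⊓ ((u - t • e)⁺ + (((k : ℝ) * ε) • e - v)⁺) := (inf_eq_left.mpr hmle).symm
          _ = 0 := hsum
    -- iterate to get `j • w ≤ v` for all `j`
    have hj : ∀ j : ℕ, ((j : ℝ) • w - v)⁺ = 0 := by
      intro j
      induction j with
      | zero =>
        have h0 : ((0 : ℕ) : ℝ) • w - v = -v := by push_cast; rw [zero_smul, zero_sub]
        rw [h0]
        exact posPart_eq_zero.mpr (neg_nonpos.mpr hv)
      | succ j ih =>
        have hk : w ⊓ (((j + 1 : ℕ) : ℝ) • e - v) ≤ 0 := by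
          have hc := hC (n * (j + 1))
          have hcast : ((n * (j + 1) : ℕ) : ℝ) * ε = ((j + 1 : ℕ) : ℝ) := by
            have hn' : (n : ℝ) ≠ 0 := by positivity
            push_cast [hε]
            field_simp
          rw [hcast] at hc
          calc w ⊓ (((j + 1 : ℕ) : ℝ) • e - v) ≤ w ⊓ (((j + 1 : ℕ) : ℝ) • e - v)⁺ :=
                inf_le_inf_left w (le_posPart _)
            _ = 0 := hc
        have hk2 : w ⊓ (((j + 1 : ℕ) : ℝ) • w - v) ≤ 0 := by
          refine le_trans (inf_le_inf_left w ?_) hk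
          exact sub_le_sub_right (smul_mono _ _ _ (by positivity) hwe) v
        have hid : (((j + 1 : ℕ) : ℝ) • w - v) - w ⊓ (((j + 1 : ℕ) : ℝ) • w - v)
            = ((((j + 1 : ℕ) : ℝ) • w - v) - w)⁺ := by
          rw [posPart_def, sub_eq_add_neg _ (w ⊓ _), neg_inf, add_sup, add_neg_cancel,
            ← sub_eq_add_neg]
        have hq : (((j + 1 : ℕ) : ℝ) • w - v) ≤ ((((j + 1 : ℕ) : ℝ) • w - v) - w)⁺ := by
          rw [← hid]
          calc (((j + 1 : ℕ) : ℝ) • w - v) = (((j + 1 : ℕ) : ℝ) • w - v) - 0 := by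
                rw [sub_zero]
            _ ≤ _ := sub_le_sub_left hk2 _
        have hstep : ((((j + 1 : ℕ) : ℝ) • w - v) - w) = ((j : ℝ) • w - v) := by
          push_cast
          rw [add_smul, one_smul]
          abel
        rw [hstep, ih] at hq
        exact posPart_eq_zero.mpr hq
    have hwv : ∀ j : ℕ, j • w ≤ v := by
      intro j
      have := posPart_eq_zero.mp (hj j)
      rw [← Nat.cast_smul_eq_nsmul ℝ j w]
      exact sub_nonpos.mp this
    have : w ≤ 0 := harch w v hwv
    exact le_antisymm this hw0
  -- Step 2: conclude by the Archimedean property.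
  refine le_antisymm ?_ (le_inf (posPart_nonneg _) he)
  apply harch ((u - v)⁺ ⊓ e) e
  intro n
  cases n with
  | zero => simpa using he
  | succ n =>
    have hn : 0 < n + 1 := n.succ_pos
    have hs := step1 (n + 1) hn
    set ε : ℝ := (((n + 1 : ℕ) : ℝ))⁻¹ with hε
    have hεpos : 0 < ε := by positivity
    have hεe : 0 ≤ ε • e := hsmul _ _ hεpos.le he
    have h1 : (u - v)⁺ ≤ (u - v - ε • e)⁺ + ε • e := by
      rw [posPart_def]
      refine sup_le ?_ (add_nonneg (posPart_nonneg _) hεe)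
      calc u - v = (u - v - ε • e) + ε • e := by abel
        _ ≤ _ := add_le_add (le_posPart _) le_rfl
    have h2 : (u - v)⁺ ⊓ e ≤ ε • e := by
      calc (u - v)⁺ ⊓ e ≤ ((u - v - ε • e)⁺ + ε • e) ⊓ e := inf_le_inf_right e h1
        _ ≤ (u - v - ε • e)⁺ ⊓ e + (ε • e) ⊓ e :=
            inf_add_le_aux (posPart_nonneg _) hεe he
        _ = (ε • e) ⊓ e := by rw [hs, zero_add]
        _ ≤ ε • e := inf_le_left
    calc (n + 1) • ((u - v)⁺ ⊓ e) = ((n + 1 : ℕ) : ℝ) • ((u - v)⁺ ⊓ e) :=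
          (Nat.cast_smul_eq_nsmul ℝ _ _).symm
      _ ≤ ((n + 1 : ℕ) : ℝ) • (ε • e) := smul_mono _ _ _ (by positivity) h2
      _ = e := by
          rw [smul_smul, hε, mul_inv_cancel₀ (by positivity), one_smul]

end RieszAux

/-- Let `T` be a weak Markov operator between Archimedean semiprime
`f`-algebras with point separating order duals and weak order units `e_A`,
`e_B`, and assume `T` is a lattice homomorphism. Then for every weak Markov
operator `S` and every real `α > 0` such that `α • T - S` is positive, one has
`S = T`. -/
theorem stmt_14
    {A B : Type*}
    [Ring A] [Lattice A] [Algebra ℝ A] [CovariantClass A A (· + ·) (· ≤ ·)]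
    -- A is a Riesz space (vector lattice) over ℝ
    (hsmulA : ∀ (r : ℝ) (x : A), 0 ≤ r → 0 ≤ x → 0 ≤ r • x)
    -- A is a lattice-ordered algebra
    (hmulA : ∀ x y : A, 0 ≤ x → 0 ≤ y → 0 ≤ x * y)
    -- the f-algebra condition
    (hfA : ∀ x y z : A, 0 ≤ z → x ⊓ y = 0 → (x * z) ⊓ y = 0 ∧ (z * x) ⊓ y = 0)
    -- A is Archimedean
    (harchA : ∀ x y : A, (∀ n : ℕ, n • x ≤ y) → x ≤ 0)
    -- the order dual of A separates the points of A
    (hsepA : ∀ x : A, x ≠ 0 → ∃ f : A →ₗ[ℝ] ℝ, Monotone f ∧ f x ≠ 0)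
    -- A is semiprime
    (hsemiA : ∀ x : A, x * x = 0 → x = 0)
    [Ring B] [Lattice B] [Algebra ℝ B] [CovariantClass B B (· + ·) (· ≤ ·)]
    -- B is a Riesz space (vector lattice) over ℝ
    (hsmulB : ∀ (r : ℝ) (x : B), 0 ≤ r → 0 ≤ x → 0 ≤ r • x)
    -- B is a lattice-ordered algebra
    (hmulB : ∀ x y : B, 0 ≤ x → 0 ≤ y → 0 ≤ x * y)
    -- the f-algebra condition
    (hfB : ∀ x y z : B, 0 ≤ z → x ⊓ y = 0 → (x * z) ⊓ y = 0 ∧ (z * x) ⊓ y = 0)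
    -- B is Archimedean
    (harchB : ∀ x y : B, (∀ n : ℕ, n • x ≤ y) → x ≤ 0)
    -- the order dual of B separates the points of B
    (hsepB : ∀ x : B, x ≠ 0 → ∃ f : B →ₗ[ℝ] ℝ, Monotone f ∧ f x ≠ 0)
    -- B is semiprime
    (hsemiB : ∀ x : B, x * x = 0 → x = 0)
    (eA : A) (eB : B)
    -- eA is a weak order unit of A
    (heApos : 0 < eA) (heAwou : ∀ x : A, |x| ⊓ eA = 0 → x = 0)
    -- eB is a weak order unit of B
    (heBpos : 0 < eB) (heBwou : ∀ x : B, |x| ⊓ eB = 0 → x = 0)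
    (T : A →ₗ[ℝ] B)
    -- T is a weak Markov operator
    (hTpos : ∀ a : A, 0 ≤ a → 0 ≤ T a) (hTe : T eA = eB)
    -- T is a lattice homomorphism
    (hlat : ∀ a : A, T |a| = |T a|)
    (S : A →ₗ[ℝ] B)
    -- S is a weak Markov operator
    (hSpos : ∀ a : A, 0 ≤ a → 0 ≤ S a) (hSe : S eA = eB)
    (α : ℝ) (hα : 0 < α)
    -- α • T - S is a positive operator
    (hdiff : ∀ a : A, 0 ≤ a → 0 ≤ (α • T - S) a) :
    S = T := by
  -- `T` commutes with taking positive parts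
  have mapPosT : ∀ x : A, T x⁺ = (T x)⁺ := by
    intro x
    have hA : x⁺ + x⁺ = x + |x| := by
      have h1 := posPart_add_negPart x
      have h2 := posPart_sub_negPart x
      calc x⁺ + x⁺ = (x⁺ - x⁻) + (x⁺ + x⁻) := by abel
        _ = x + |x| := by rw [h2, h1]
    have hB : (T x)⁺ + (T x)⁺ = T x + |T x| := by
      have h1 := posPart_add_negPart (T x)
      have h2 := posPart_sub_negPart (T x)
      calc (T x)⁺ + (T x)⁺ = ((T x)⁺ - (T x)⁻) + ((T x)⁺ + (T x)⁻) := by abel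
        _ = T x + |T x| := by rw [h2, h1]
    have h3 : T x⁺ + T x⁺ = (T x)⁺ + (T x)⁺ := by
      rw [← map_add, hA, map_add, hlat, hB]
    have h4 : (2 : ℝ) • T x⁺ = (2 : ℝ) • (T x)⁺ := by
      rw [two_smul, two_smul]; exact h3
    have h5 := congrArg (fun z : B => (2 : ℝ)⁻¹ • z) h4
    simpa [smul_smul] using h5
  -- domination of positive parts
  have gen : ∀ b : A, (S b)⁺ ≤ α • (T b)⁺ := by
    intro b
    have hx0 : 0 ≤ b⁺ := posPart_nonneg b
    have hTx : T b⁺ = (T b)⁺ := mapPosT b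
    have hbb : b⁺ - b = b⁻ := by
      have h := eq_add_of_sub_eq (posPart_sub_negPart b)
      rw [h]; abel
    have hSx : (S b)⁺ ≤ S b⁺ := by
      rw [posPart_def]
      refine sup_le ?_ (hSpos _ hx0)
      have h5 : 0 ≤ S b⁺ - S b := by
        rw [← map_sub, hbb]
        exact hSpos _ (negPart_nonneg b)
      exact sub_nonneg.mp h5
    have hdm := hdiff b⁺ hx0
    rw [LinearMap.sub_apply, LinearMap.smul_apply] at hdm
    exact hSx.trans ((sub_nonneg.mp hdm).trans_eq (by rw [hTx]))
  -- pointwise equality on nonnegative elements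
  have main : ∀ a : A, 0 ≤ a → S a = T a := by
    intro a ha
    have hu : 0 ≤ S a := hSpos a ha
    have hv : 0 ≤ T a := hTpos a ha
    have hD1 : ∀ t : ℝ, 0 < t → (S a - t • eB)⁺ ⊓ (t • eB - T a)⁺ = 0 := by
      intro t ht
      have hg := gen (a - t • eA)
      rw [map_sub, map_sub, map_smul, map_smul, hSe, hTe] at hg
      have hbase : (T a - t • eB)⁺ ⊓ (t • eB - T a)⁺ = 0 := by
        rw [show (t • eB - T a) = -(T a - t • eB) by abel, posPart_neg]
        exact posPart_inf_negPart_eq_zero _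
      exact disj_of_le_smul hbase (posPart_nonneg _) hsmulB hα.le hg
    have hD2 : ∀ t : ℝ, 0 < t → (T a - t • eB)⁺ ⊓ (t • eB - S a)⁺ = 0 := by
      intro t ht
      have hg := gen (t • eA - a)
      rw [map_sub, map_sub, map_smul, map_smul, hSe, hTe] at hg
      have hbase : (t • eB - T a)⁺ ⊓ (T a - t • eB)⁺ = 0 := by
        rw [show (t • eB - T a) = -(T a - t • eB) by abel, posPart_neg, inf_comm]
        exact posPart_inf_negPart_eq_zero _
      have h6 := disj_of_le_smul hbase (posPart_nonneg _) hsmulB hα.le hg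
      rw [inf_comm] at h6
      exact h6
    have k1 := key_lemma hsmulB harchB eB (S a) (T a) heBpos.le hv hD1
    have k2 := key_lemma hsmulB harchB eB (T a) (S a) heBpos.le hu hD2
    have e1 : (S a - T a)⁺ = 0 :=
      heBwou _ (by rw [abs_of_nonneg (posPart_nonneg _)]; exact k1)
    have e2 : (T a - S a)⁺ = 0 :=
      heBwou _ (by rw [abs_of_nonneg (posPart_nonneg _)]; exact k2)
    exact le_antisymm (sub_nonpos.mp (posPart_eq_zero.mp e1))
      (sub_nonpos.mp (posPart_eq_zero.mp e2))
  refine LinearMap.ext fun a => ?_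
  have h1 := main a⁺ (posPart_nonneg a)
  have h2 := main a⁻ (negPart_nonneg a)
  calc S a = S (a⁺ - a⁻) := by rw [posPart_sub_negPart]
    _ = S a⁺ - S a⁻ := map_sub S _ _
    _ = T a⁺ - T a⁻ := by rw [h1, h2]
    _ = T (a⁺ - a⁻) := (map_sub T _ _).symm
    _ = T a := by rw [posPart_sub_negPart]
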